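/- In the ODE flow setting, fix a Borel probability measure μ on ℝ^ℓ with finite second moment, and for a Borel probability measure ρ on ℝ^d with finite second moment let ν_ρ(t) denote the pushforward of the product measure ρ ⊗ μ under the map (x, θ) ↦ X(t; θ, x). Then there exists a constant C₀ > 0 depending only on the Lipschitz constant C such that for all such ρ, ρ′ and all t ∈ [0,T]: W₂(ν_ρ(t), ν_{ρ′}(t)) ≤ e^{C₀ t/2} · W₂(ρ, ρ′). In particular, if ρ and ρ′ both assign full mass to the closed Euclidean ball of radius δ centered at some x₀ ∈ ℝ^d, then W₂(ν_ρ(t), ν_{ρ′}(t)) ≤ 2δ e^{C₀ t/2}. (This is the ODE specialization of the initial-condition stability estimates Eqs. (C.11)–(C.12) in the proof of Theorem 2.2.) -/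

import Mathlib

open MeasureTheory Set

/-- The squared Wasserstein-2 distance between two Borel measures. -/
noncomputable def W2sq {E : Type*} [MeasurableSpace E] [NormedAddCommGroup E]
    (μ ν : Measure E) : ℝ :=
  sInf {r : ℝ | ∃ π : Measure (E × E), IsProbabilityMeasure π ∧
    π.map Prod.fst = μ ∧ π.map Prod.snd = ν ∧ r = ∫ p, ‖p.1 - p.2‖ ^ 2 ∂π}

/-- The Wasserstein-2 distance. -/
noncomputable def W2 {E : Type*} [MeasurableSpace E] [NormedAddCommGroup E]
    (μ ν : Measure E) : ℝ :=
  Real.sqrt (W2sq μ ν)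

lemma euclid_norm_le_sum_abs {n : ℕ} (v : EuclideanSpace ℝ (Fin n)) :
    ‖v‖ ≤ ∑ i, |v i| := by
  rw [EuclideanSpace.norm_eq]
  have h : ∑ i, ‖v i‖ ^ 2 ≤ (∑ i, |v i|) ^ 2 := by
    simpa [Real.norm_eq_abs, sq_abs] using
      Finset.sum_sq_le_sq_sum_of_nonneg (f := fun i => |v i|) (s := Finset.univ)
        (fun i _ => abs_nonneg _)
  calc Real.sqrt (∑ i, ‖v i‖ ^ 2) ≤ Real.sqrt ((∑ i, |v i|) ^ 2) := Real.sqrt_le_sqrt h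
    _ = ∑ i, |v i| := Real.sqrt_sq (Finset.sum_nonneg fun i _ => abs_nonneg _)

lemma flow_bilip {d l : ℕ} (C T : ℝ) (hC : 0 < C) (hT : 0 < T)
    (f : EuclideanSpace ℝ (Fin d) → ℝ → EuclideanSpace ℝ (Fin l) → EuclideanSpace ℝ (Fin d))
    (hLip : ∀ (x xhat : EuclideanSpace ℝ (Fin d)) (θ θhat : EuclideanSpace ℝ (Fin l)),
      ∀ t ∈ Icc (0 : ℝ) T,
      ∑ i, |f x t θ i - f xhat t θhat i| ≤ C * (‖x - xhat‖ + ‖θ - θhat‖))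
    (X : ℝ → EuclideanSpace ℝ (Fin l) → EuclideanSpace ℝ (Fin d) → EuclideanSpace ℝ (Fin d))
    (hX0 : ∀ θ x₀, X 0 θ x₀ = x₀)
    (hXode : ∀ θ x₀, ∀ t ∈ Icc (0 : ℝ) T,
      HasDerivWithinAt (fun s => X s θ x₀) (f (X t θ x₀) t θ) (Icc 0 T) t) :
    ∀ t ∈ Icc (0 : ℝ) T, ∀ θ x x',
      dist (X t θ x) (X t θ x') ≤ Real.exp (C * t) * dist x x' ∧
      dist x x' ≤ Real.exp (C * t) * dist (X t θ x) (X t θ x') := by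
  intro t ht θ x x'
  have htT : t ≤ T := ht.2
  have ht0 : 0 ≤ t := ht.1
  -- the field is pointwise Lipschitz in x
  have hfl : ∀ (s : ℝ), s ∈ Icc (0:ℝ) T → ∀ y y' : EuclideanSpace ℝ (Fin d),
      dist (f y s θ) (f y' s θ) ≤ C * dist y y' := by
    intro s hs y y'
    rw [dist_eq_norm, dist_eq_norm]
    calc ‖f y s θ - f y' s θ‖ ≤ ∑ i, |(f y s θ - f y' s θ) i| := euclid_norm_le_sum_abs _
      _ = ∑ i, |f y s θ i - f y' s θ i| := by
          simp [PiLp.sub_apply]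
      _ ≤ C * (‖y - y'‖ + ‖θ - θ‖) := hLip y y' θ θ s hs
      _ = C * ‖y - y'‖ := by simp
  -- clamp function
  set cl : ℝ → ℝ := fun s => min (max s 0) T with hcl
  have hclmem : ∀ s, cl s ∈ Icc (0:ℝ) T := by
    intro s
    constructor
    · exact le_min (le_max_right _ _) hT.le
    · exact min_le_right _ _
  have hcl_eq : ∀ s ∈ Icc (0:ℝ) T, cl s = s := by
    intro s hs
    simp [hcl, max_eq_left hs.1, min_eq_left hs.2]
  have hKC : ((⟨C, hC.le⟩ : NNReal) : ℝ) = C := rfl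
  -- continuity of trajectories
  have hcont : ∀ (x₀ : EuclideanSpace ℝ (Fin d)),
      ContinuousOn (fun s => X s θ x₀) (Icc 0 T) :=
    fun x₀ s hs => (hXode θ x₀ s hs).continuousWithinAt
  constructor
  · -- forward estimate
    set v : ℝ → EuclideanSpace ℝ (Fin d) → EuclideanSpace ℝ (Fin d) :=
      fun s y => f y (cl s) θ with hv
    have hvlip : ∀ s, LipschitzWith ⟨C, hC.le⟩ (v s) := by
      intro s
      exact LipschitzWith.of_dist_le_mul fun y y' => hfl (cl s) (hclmem s) y y'
    have hderiv : ∀ (x₀ : EuclideanSpace ℝ (Fin d)), ∀ s ∈ Ico (0:ℝ) t,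
        HasDerivWithinAt (fun u => X u θ x₀) (v s (X s θ x₀)) (Ici s) s := by
      intro x₀ s hs
      have hsT : s ∈ Icc (0:ℝ) T := ⟨hs.1, hs.2.le.trans htT⟩
      have h1 : HasDerivWithinAt (fun u => X u θ x₀) (f (X s θ x₀) s θ) (Icc 0 T) s :=
        hXode θ x₀ s hsT
      have hmem : Icc (0:ℝ) T ∈ nhdsWithin s (Ici s) := by
        refine Filter.mem_of_superset (Icc_mem_nhdsGE_of_mem
          (⟨le_refl s, lt_of_lt_of_le hs.2 htT⟩ : s ∈ Ico s T)) ?_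
        exact Icc_subset_Icc hs.1 le_rfl
      have h5 := h1.mono_of_mem_nhdsWithin hmem
      have heq : v s (X s θ x₀) = f (X s θ x₀) s θ := by
        show f (X s θ x₀) (cl s) θ = f (X s θ x₀) s θ
        rw [hcl_eq s hsT]
      exact heq ▸ h5
    have := dist_le_of_trajectories_ODE hvlip
      ((hcont x).mono (Icc_subset_Icc le_rfl htT))
      (hderiv x)
      ((hcont x').mono (Icc_subset_Icc le_rfl htT))
      (hderiv x')
      (le_of_eq (by rw [hX0, hX0]))
      t ⟨ht0, le_rfl⟩
    change _ ≤ _ * Real.exp (C * (t - 0)) at this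
    simpa [mul_comm] using this
  · -- backward estimate
    set w : ℝ → EuclideanSpace ℝ (Fin d) → EuclideanSpace ℝ (Fin d) :=
      fun s y => -f y (cl (t - s)) θ with hw
    have hwlip : ∀ s, LipschitzWith ⟨C, hC.le⟩ (w s) := by
      intro s
      refine LipschitzWith.of_dist_le_mul fun y y' => ?_
      calc dist (w s y) (w s y')
          = dist (f y (cl (t - s)) θ) (f y' (cl (t - s)) θ) := dist_neg_neg _ _
        _ ≤ C * dist y y' := hfl (cl (t - s)) (hclmem _) y y'
    have hmaps : MapsTo (fun s => t - s) (Icc (0:ℝ) t) (Icc 0 T) := by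
      intro s hs
      simp only [mem_Icc] at hs ⊢
      constructor <;> linarith [hs.1, hs.2]
    have hderiv : ∀ (x₀ : EuclideanSpace ℝ (Fin d)), ∀ s ∈ Ico (0:ℝ) t,
        HasDerivWithinAt (fun u => X (t - u) θ x₀) (w s (X (t - s) θ x₀)) (Ici s) s := by
      intro x₀ s hs
      have hts : t - s ∈ Icc (0:ℝ) T := ⟨by linarith [hs.2], by linarith [hs.1]⟩
      have h1 : HasDerivWithinAt (fun u => X u θ x₀) (f (X (t-s) θ x₀) (t-s) θ)
          (Icc 0 T) (t - s) := hXode θ x₀ (t - s) hts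
      have h2 : HasDerivWithinAt (fun u : ℝ => t - u) (-1 : ℝ) (Icc 0 t) s := by
        simpa using (hasDerivWithinAt_id s (Icc (0:ℝ) t)).const_sub t
      have h3 := HasDerivWithinAt.scomp s h1 h2 hmaps
      have h4 : HasDerivWithinAt (fun u => X (t - u) θ x₀)
          (-(f (X (t-s) θ x₀) (t-s) θ)) (Icc 0 t) s := by
        simp at h3; exact h3
      have hmem : Icc (0:ℝ) t ∈ nhdsWithin s (Ici s) := by
        refine Filter.mem_of_superset (Icc_mem_nhdsGE_of_mem
          (⟨le_refl s, hs.2⟩ : s ∈ Ico s t)) ?_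
        exact Icc_subset_Icc hs.1 le_rfl
      have h5 := h4.mono_of_mem_nhdsWithin hmem
      have heq : w s (X (t - s) θ x₀) = -f (X (t - s) θ x₀) (t - s) θ := by
        show -f (X (t - s) θ x₀) (cl (t - s)) θ = _
        rw [hcl_eq (t - s) hts]
      exact heq ▸ h5
    have hcont' : ∀ (x₀ : EuclideanSpace ℝ (Fin d)),
        ContinuousOn (fun s => X (t - s) θ x₀) (Icc 0 t) := by
      intro x₀
      exact (hcont x₀).comp (Continuous.continuousOn (by continuity)) hmaps
    have := dist_le_of_trajectories_ODE hwlip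
      (hcont' x) (hderiv x) (hcont' x') (hderiv x')
      (le_of_eq (by simp : dist (X (t - 0) θ x) (X (t - 0) θ x')
        = dist (X t θ x) (X t θ x')))
      t ⟨ht0, le_rfl⟩
    simp only [sub_self, hX0] at this
    change _ ≤ _ * Real.exp (C * (t - 0)) at this
    simpa [mul_comm] using this

lemma W2sq_nonneg_mem {E : Type*} [MeasurableSpace E] [NormedAddCommGroup E]
    (μ ν : Measure E) : ∀ r ∈ {r : ℝ | ∃ π : Measure (E × E), IsProbabilityMeasure π ∧
      π.map Prod.fst = μ ∧ π.map Prod.snd = ν ∧ r = ∫ p, ‖p.1 - p.2‖ ^ 2 ∂π}, 0 ≤ r := by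
  rintro r ⟨π, _, _, _, rfl⟩
  exact integral_nonneg fun p => by positivity

lemma W2sq_nonneg {E : Type*} [MeasurableSpace E] [NormedAddCommGroup E]
    (μ ν : Measure E) : 0 ≤ W2sq μ ν :=
  Real.sInf_nonneg (W2sq_nonneg_mem μ ν)

lemma aux_W2sq_le {d l : ℕ}
    (μ : Measure (EuclideanSpace ℝ (Fin l))) [IsProbabilityMeasure μ]
    (G : EuclideanSpace ℝ (Fin d) → EuclideanSpace ℝ (Fin l) → EuclideanSpace ℝ (Fin d))
    (hG : Measurable (fun p : EuclideanSpace ℝ (Fin d) × EuclideanSpace ℝ (Fin l) => G p.1 p.2))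
    (L : ℝ) (hL : 0 < L)
    (hfwd : ∀ x x' θ, ‖G x θ - G x' θ‖ ≤ L * ‖x - x'‖)
    (hbwd : ∀ x x' θ, ‖x - x'‖ ≤ L * ‖G x θ - G x' θ‖)
    (ρ ρ' : Measure (EuclideanSpace ℝ (Fin d)))
    [IsProbabilityMeasure ρ] [IsProbabilityMeasure ρ'] :
    W2sq ((ρ.prod μ).map fun p => G p.1 p.2) ((ρ'.prod μ).map fun p => G p.1 p.2) ≤
      L ^ 2 * W2sq ρ ρ' := by
  classical
  let E := EuclideanSpace ℝ (Fin d)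
  let Θ := EuclideanSpace ℝ (Fin l)
  set ν : Measure E := (ρ.prod μ).map fun p => G p.1 p.2 with hν
  set ν' : Measure E := (ρ'.prod μ).map fun p => G p.1 p.2 with hν'
  set S := {r : ℝ | ∃ π : Measure (E × E), IsProbabilityMeasure π ∧
    π.map Prod.fst = ρ ∧ π.map Prod.snd = ρ' ∧ r = ∫ p, ‖p.1 - p.2‖ ^ 2 ∂π} with hS
  set Tgt := {r : ℝ | ∃ π : Measure (E × E), IsProbabilityMeasure π ∧
    π.map Prod.fst = ν ∧ π.map Prod.snd = ν' ∧ r = ∫ p, ‖p.1 - p.2‖ ^ 2 ∂π} with hTgt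
  have hTbdd : BddBelow Tgt := ⟨0, fun r hr => W2sq_nonneg_mem ν ν' r hr⟩
  have hSne : S.Nonempty := by
    refine ⟨∫ p : E × E, ‖p.1 - p.2‖ ^ 2 ∂(ρ.prod ρ'), ρ.prod ρ', inferInstance, ?_, ?_, rfl⟩
    · simp
    · simp
  -- key step
  have hkey : ∀ r ∈ S, sInf Tgt ≤ L ^ 2 * r := by
    rintro r ⟨π, hπ, hπ1, hπ2, rfl⟩
    haveI := hπ
    set Φ : (E × E) × Θ → E × E := fun q => (G q.1.1 q.2, G q.1.2 q.2) with hΦdef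
    have hΦ : Measurable Φ := by
      apply Measurable.prod
      · exact hG.comp ((measurable_fst.fst).prodMk measurable_snd)
      · exact hG.comp ((measurable_fst.snd).prodMk measurable_snd)
    set σ : Measure (E × E) := (π.prod μ).map Φ with hσdef
    haveI hσP : IsProbabilityMeasure σ := Measure.isProbabilityMeasure_map hΦ.aemeasurable
    -- marginals
    have hkeymap : (π.prod μ).map (Prod.map Prod.fst id) = ρ.prod μ := by
      rw [← Measure.map_prod_map π μ measurable_fst measurable_id, hπ1, Measure.map_id]
    have hkeymap' : (π.prod μ).map (Prod.map Prod.snd id) = ρ'.prod μ := by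
      rw [← Measure.map_prod_map π μ measurable_snd measurable_id, hπ2, Measure.map_id]
    have hm1 : σ.map Prod.fst = ν := by
      rw [hσdef, Measure.map_map measurable_fst hΦ]
      have : (Prod.fst ∘ Φ) = (fun p : E × Θ => G p.1 p.2) ∘ Prod.map Prod.fst id := rfl
      rw [this, ← Measure.map_map hG (measurable_fst.prodMap measurable_id), hkeymap, hν]
    have hm2 : σ.map Prod.snd = ν' := by
      rw [hσdef, Measure.map_map measurable_snd hΦ]
      have : (Prod.snd ∘ Φ) = (fun p : E × Θ => G p.1 p.2) ∘ Prod.map Prod.snd id := rfl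
      rw [this, ← Measure.map_map hG (measurable_snd.prodMap measurable_id), hkeymap', hν']
    -- cost function
    have hhm : Measurable fun p : E × E => ‖p.1 - p.2‖ ^ 2 :=
      ((measurable_fst.sub measurable_snd).norm.pow measurable_const)
    have hcostσ : ∫ p, ‖p.1 - p.2‖ ^ 2 ∂σ
        = ∫ q, ‖G q.1.1 q.2 - G q.1.2 q.2‖ ^ 2 ∂(π.prod μ) := by
      rw [hσdef, integral_map hΦ.aemeasurable hhm.aestronglyMeasurable]
    have hfstmap : (π.prod μ).map Prod.fst = π := by simp
    have hintπ_iff : Integrable (fun p : E × E => ‖p.1 - p.2‖ ^ 2) π ↔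
        Integrable (fun q : (E × E) × Θ => ‖q.1.1 - q.1.2‖ ^ 2) (π.prod μ) := by
      have h := integrable_map_measure (μ := π.prod μ)
        (f := (Prod.fst : (E × E) × Θ → E × E))
        (g := fun p : E × E => ‖p.1 - p.2‖ ^ 2)
        (by rw [hfstmap]; exact hhm.aestronglyMeasurable) measurable_fst.aemeasurable
      rw [hfstmap] at h
      exact h
    have hintσ_iff : Integrable (fun p : E × E => ‖p.1 - p.2‖ ^ 2) σ ↔
        Integrable (fun q : (E × E) × Θ => ‖G q.1.1 q.2 - G q.1.2 q.2‖ ^ 2) (π.prod μ) := by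
      rw [hσdef]
      exact integrable_map_measure hhm.aestronglyMeasurable hΦ.aemeasurable
    have hGmeas : Measurable fun q : (E × E) × Θ => ‖G q.1.1 q.2 - G q.1.2 q.2‖ ^ 2 := by
      refine Measurable.pow ?_ measurable_const
      refine Measurable.norm (Measurable.sub ?_ ?_)
      · exact hG.comp ((measurable_fst.fst).prodMk measurable_snd)
      · exact hG.comp ((measurable_fst.snd).prodMk measurable_snd)
    have hpt1 : ∀ q : (E × E) × Θ,
        ‖G q.1.1 q.2 - G q.1.2 q.2‖ ^ 2 ≤ L ^ 2 * ‖q.1.1 - q.1.2‖ ^ 2 := by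
      intro q
      have := pow_le_pow_left₀ (norm_nonneg _) (hfwd q.1.1 q.1.2 q.2) 2
      calc ‖G q.1.1 q.2 - G q.1.2 q.2‖ ^ 2 ≤ (L * ‖q.1.1 - q.1.2‖) ^ 2 := this
        _ = L ^ 2 * ‖q.1.1 - q.1.2‖ ^ 2 := by ring
    have hpt2 : ∀ q : (E × E) × Θ,
        ‖q.1.1 - q.1.2‖ ^ 2 ≤ L ^ 2 * ‖G q.1.1 q.2 - G q.1.2 q.2‖ ^ 2 := by
      intro q
      have := pow_le_pow_left₀ (norm_nonneg _) (hbwd q.1.1 q.1.2 q.2) 2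
      calc ‖q.1.1 - q.1.2‖ ^ 2 ≤ (L * ‖G q.1.1 q.2 - G q.1.2 q.2‖) ^ 2 := this
        _ = _ := by ring
    have hstep : ∫ p, ‖p.1 - p.2‖ ^ 2 ∂σ ≤ L ^ 2 * ∫ p, ‖p.1 - p.2‖ ^ 2 ∂π := by
      by_cases hint : Integrable (fun p : E × E => ‖p.1 - p.2‖ ^ 2) π
      · have hint2 := hintπ_iff.mp hint
        have hintG : Integrable
            (fun q : (E × E) × Θ => ‖G q.1.1 q.2 - G q.1.2 q.2‖ ^ 2) (π.prod μ) := by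
          refine (hint2.const_mul (L ^ 2)).mono' hGmeas.aestronglyMeasurable ?_
          exact Filter.Eventually.of_forall fun q => by
            rw [Real.norm_eq_abs, abs_of_nonneg (by positivity)]; exact hpt1 q
        rw [hcostσ]
        have h1 : ∫ q, ‖G q.1.1 q.2 - G q.1.2 q.2‖ ^ 2 ∂(π.prod μ)
            ≤ ∫ q, L ^ 2 * ‖q.1.1 - q.1.2‖ ^ 2 ∂(π.prod μ) :=
          integral_mono_ae hintG (hint2.const_mul _)
            (Filter.Eventually.of_forall hpt1)
        have hmarg : ∫ q : (E × E) × Θ, ‖q.1.1 - q.1.2‖ ^ 2 ∂(π.prod μ)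
            = ∫ p : E × E, ‖p.1 - p.2‖ ^ 2 ∂π := by
          have h := integral_map (μ := π.prod μ)
            (φ := (Prod.fst : (E × E) × Θ → E × E))
            (f := fun p : E × E => ‖p.1 - p.2‖ ^ 2)
            measurable_fst.aemeasurable
            (by rw [hfstmap]; exact hhm.aestronglyMeasurable)
          rw [hfstmap] at h
          exact h.symm
        have h2 : ∫ q, L ^ 2 * ‖q.1.1 - q.1.2‖ ^ 2 ∂(π.prod μ)
            = L ^ 2 * ∫ p, ‖p.1 - p.2‖ ^ 2 ∂π := by
          rw [integral_const_mul, hmarg]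
        exact h1.trans (le_of_eq h2)
      · have hσnotint : ¬ Integrable (fun p : E × E => ‖p.1 - p.2‖ ^ 2) σ := by
          intro hc
          have hc2 := hintσ_iff.mp hc
          have : Integrable (fun q : (E × E) × Θ => ‖q.1.1 - q.1.2‖ ^ 2) (π.prod μ) := by
            refine (hc2.const_mul (L ^ 2)).mono'
              ((measurable_fst.fst.sub measurable_fst.snd).norm.pow
                measurable_const).aestronglyMeasurable ?_
            exact Filter.Eventually.of_forall fun q => by
              rw [Real.norm_eq_abs, abs_of_nonneg (by positivity)]; exact hpt2 q
          exact hint (hintπ_iff.mpr this)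
        rw [integral_undef hσnotint, integral_undef hint]
        simp
    -- conclude
    refine le_trans (csInf_le hTbdd ?_) hstep
    exact ⟨σ, hσP, hm1, hm2, rfl⟩
  -- from hkey to the final bound
  have hL2 : (0:ℝ) < L ^ 2 := by positivity
  have h1 : sInf Tgt / L ^ 2 ≤ sInf S := by
    refine le_csInf hSne fun r hr => ?_
    rw [div_le_iff₀ hL2]
    calc sInf Tgt ≤ L ^ 2 * r := hkey r hr
      _ = r * L ^ 2 := mul_comm _ _
  have := (div_le_iff₀ hL2).mp h1
  calc W2sq ν ν' = sInf Tgt := rfl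
    _ ≤ sInf S * L ^ 2 := this
    _ = L ^ 2 * W2sq ρ ρ' := mul_comm _ _

lemma W2_le_of_ball {d : ℕ} (ρ ρ' : Measure (EuclideanSpace ℝ (Fin d)))
    [IsProbabilityMeasure ρ] [IsProbabilityMeasure ρ'] (δ : ℝ) (hδ : 0 < δ)
    (x₀ : EuclideanSpace ℝ (Fin d))
    (h1 : ρ (Metric.closedBall x₀ δ) = 1) (h2 : ρ' (Metric.closedBall x₀ δ) = 1) :
    W2 ρ ρ' ≤ 2 * δ := by
  set B := Metric.closedBall x₀ δ with hB
  have hhm : Measurable fun p : EuclideanSpace ℝ (Fin d) × EuclideanSpace ℝ (Fin d) =>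
      ‖p.1 - p.2‖ ^ 2 :=
    ((measurable_fst.sub measurable_snd).norm.pow measurable_const)
  have hBB : (ρ.prod ρ') (B ×ˢ B) = 1 := by
    rw [Measure.prod_prod, h1, h2, one_mul]
  have hco : (ρ.prod ρ') (B ×ˢ B)ᶜ = 0 := by
    rw [measure_compl (measurableSet_closedBall.prod measurableSet_closedBall)
      (measure_ne_top _ _), hBB, measure_univ, tsub_self]
  have hae : ∀ᵐ p ∂(ρ.prod ρ'), ‖p.1 - p.2‖ ^ 2 ≤ (2 * δ) ^ 2 := by
    rw [ae_iff]
    refine measure_mono_null ?_ hco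
    intro p hp
    simp only [mem_setOf_eq, not_le] at hp
    intro hpBB
    rw [mem_prod] at hpBB
    have hd1 : dist p.1 x₀ ≤ δ := Metric.mem_closedBall.mp hpBB.1
    have hd2 : dist p.2 x₀ ≤ δ := Metric.mem_closedBall.mp hpBB.2
    have hdd : ‖p.1 - p.2‖ ≤ 2 * δ := by
      rw [← dist_eq_norm]
      calc dist p.1 p.2 ≤ dist p.1 x₀ + dist x₀ p.2 := dist_triangle _ _ _
        _ = dist p.1 x₀ + dist p.2 x₀ := by rw [dist_comm x₀]
        _ ≤ 2 * δ := by linarith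
    have := pow_le_pow_left₀ (norm_nonneg _) hdd 2
    linarith [hp]
  have hint : Integrable (fun p : EuclideanSpace ℝ (Fin d) × EuclideanSpace ℝ (Fin d) =>
      ‖p.1 - p.2‖ ^ 2) (ρ.prod ρ') := by
    refine (integrable_const ((2 * δ) ^ 2)).mono' hhm.aestronglyMeasurable ?_
    exact hae.mono fun p hp => by
      rw [Real.norm_eq_abs, abs_of_nonneg (by positivity)]; exact hp
  have hle : ∫ p, ‖p.1 - p.2‖ ^ 2 ∂(ρ.prod ρ') ≤ (2 * δ) ^ 2 := by
    have := integral_mono_ae hint (integrable_const _) hae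
    simpa using this
  have hmem : (∫ p, ‖p.1 - p.2‖ ^ 2 ∂(ρ.prod ρ')) ∈
      {r : ℝ | ∃ π : Measure (EuclideanSpace ℝ (Fin d) × EuclideanSpace ℝ (Fin d)),
        IsProbabilityMeasure π ∧ π.map Prod.fst = ρ ∧ π.map Prod.snd = ρ' ∧
        r = ∫ p, ‖p.1 - p.2‖ ^ 2 ∂π} :=
    ⟨ρ.prod ρ', inferInstance, by simp, by simp, rfl⟩
  have hW2sq : W2sq ρ ρ' ≤ (2 * δ) ^ 2 :=
    (csInf_le ⟨0, W2sq_nonneg_mem _ _⟩ hmem).trans hle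
  calc W2 ρ ρ' = Real.sqrt (W2sq ρ ρ') := rfl
    _ ≤ Real.sqrt ((2 * δ) ^ 2) := Real.sqrt_le_sqrt hW2sq
    _ = 2 * δ := Real.sqrt_sq (by positivity)
/-- ODE specialization of the initial-condition stability estimates
Eqs. (C.11)–(C.12) in the proof of Theorem 2.2: fixing a parameter distribution `μ`,
the `W₂`-distance between the pushforwards of `ρ ⊗ μ` and `ρ′ ⊗ μ` under
`(x, θ) ↦ X(t; θ, x)` is at most `e^{C₀ t / 2} · W₂(ρ, ρ′)`; in particular, if `ρ, ρ′`
are both supported in a closed ball of radius `δ`, it is at most `2 δ e^{C₀ t / 2}`. -/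
theorem ode_W2_initial_condition_stability
    {d l : ℕ} (C T : ℝ) (hC : 0 < C) (hT : 0 < T)
    (f : EuclideanSpace ℝ (Fin d) → ℝ → EuclideanSpace ℝ (Fin l) → EuclideanSpace ℝ (Fin d))
    (hf_cont : ContinuousOn
      (fun p : EuclideanSpace ℝ (Fin d) × ℝ × EuclideanSpace ℝ (Fin l) => f p.1 p.2.1 p.2.2)
      (univ ×ˢ Icc 0 T ×ˢ univ))
    (hLip : ∀ (x xhat : EuclideanSpace ℝ (Fin d)) (θ θhat : EuclideanSpace ℝ (Fin l)),
      ∀ t ∈ Icc (0 : ℝ) T,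
      ∑ i, |f x t θ i - f xhat t θhat i| ≤ C * (‖x - xhat‖ + ‖θ - θhat‖))
    (hM₀ : ∃ M₀ : ℝ, ∀ t ∈ Icc (0 : ℝ) T, ∑ i, |f 0 t 0 i| ≤ M₀)
    (X : ℝ → EuclideanSpace ℝ (Fin l) → EuclideanSpace ℝ (Fin d) → EuclideanSpace ℝ (Fin d))
    (hX0 : ∀ θ x₀, X 0 θ x₀ = x₀)
    (hXode : ∀ θ x₀, ∀ t ∈ Icc (0 : ℝ) T,
      HasDerivWithinAt (fun s => X s θ x₀) (f (X t θ x₀) t θ) (Icc 0 T) t)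
    (hXcont : ContinuousOn
      (fun p : ℝ × EuclideanSpace ℝ (Fin l) × EuclideanSpace ℝ (Fin d) => X p.1 p.2.1 p.2.2)
      (Icc 0 T ×ˢ univ ×ˢ univ))
    (μ : Measure (EuclideanSpace ℝ (Fin l))) (hμ : IsProbabilityMeasure μ)
    (hμmom : Integrable (fun θ => ‖θ‖ ^ 2) μ) :
    ∃ C₀ > (0 : ℝ),
      ∀ ρ ρ' : Measure (EuclideanSpace ℝ (Fin d)),
        IsProbabilityMeasure ρ → IsProbabilityMeasure ρ' →
        Integrable (fun x => ‖x‖ ^ 2) ρ → Integrable (fun x => ‖x‖ ^ 2) ρ' →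
        ∀ t ∈ Icc (0 : ℝ) T,
          W2 ((ρ.prod μ).map fun p => X t p.2 p.1) ((ρ'.prod μ).map fun p => X t p.2 p.1) ≤
              Real.exp (C₀ * t / 2) * W2 ρ ρ' ∧
          (∀ (δ : ℝ) (x₀ : EuclideanSpace ℝ (Fin d)), 0 < δ →
            ρ (Metric.closedBall x₀ δ) = 1 → ρ' (Metric.closedBall x₀ δ) = 1 →
            W2 ((ρ.prod μ).map fun p => X t p.2 p.1)
                ((ρ'.prod μ).map fun p => X t p.2 p.1) ≤
              2 * δ * Real.exp (C₀ * t / 2)) := by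

  refine ⟨2 * C, by linarith, ?_⟩
  intro ρ ρ' hρ hρ' hmom hmom' t ht
  haveI := hμ; haveI := hρ; haveI := hρ'
  set L := Real.exp (C * t) with hL
  have hLpos : (0:ℝ) < L := Real.exp_pos _
  have hbl := flow_bilip C T hC hT f hLip X hX0 hXode t ht
  have hGc : Continuous (fun p : EuclideanSpace ℝ (Fin d) × EuclideanSpace ℝ (Fin l) =>
      X t p.2 p.1) := by
    refine hXcont.comp_continuous (continuous_const.prodMk (continuous_snd.prodMk continuous_fst)) ?_
    intro p
    exact mk_mem_prod ht (mk_mem_prod (mem_univ _) (mem_univ _))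
  have hfwd : ∀ (x x' : EuclideanSpace ℝ (Fin d)) (θ : EuclideanSpace ℝ (Fin l)),
      ‖X t θ x - X t θ x'‖ ≤ L * ‖x - x'‖ := by
    intro x x' θ
    have := (hbl θ x x').1
    rwa [dist_eq_norm, dist_eq_norm] at this
  have hbwd : ∀ (x x' : EuclideanSpace ℝ (Fin d)) (θ : EuclideanSpace ℝ (Fin l)),
      ‖x - x'‖ ≤ L * ‖X t θ x - X t θ x'‖ := by
    intro x x' θ
    have := (hbl θ x x').2
    rwa [dist_eq_norm, dist_eq_norm] at this
  have key : W2sq ((ρ.prod μ).map fun p => X t p.2 p.1)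
      ((ρ'.prod μ).map fun p => X t p.2 p.1) ≤ L ^ 2 * W2sq ρ ρ' :=
    aux_W2sq_le μ (fun x θ => X t θ x) hGc.measurable L hLpos hfwd hbwd ρ ρ'
  have hexp : Real.exp (2 * C * t / 2) = L := by
    rw [hL]; congr 1; ring
  have hmain : W2 ((ρ.prod μ).map fun p => X t p.2 p.1)
      ((ρ'.prod μ).map fun p => X t p.2 p.1) ≤ Real.exp (2 * C * t / 2) * W2 ρ ρ' := by
    have h2 := Real.sqrt_le_sqrt key
    rw [Real.sqrt_mul (by positivity : (0:ℝ) ≤ L ^ 2), Real.sqrt_sq hLpos.le] at h2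
    rw [hexp]
    exact h2
  refine ⟨hmain, ?_⟩
  intro δ x₀ hδ hb hb'
  have hW2ρ : W2 ρ ρ' ≤ 2 * δ := W2_le_of_ball ρ ρ' δ hδ x₀ hb hb'
  calc W2 ((ρ.prod μ).map fun p => X t p.2 p.1) ((ρ'.prod μ).map fun p => X t p.2 p.1)
      ≤ Real.exp (2 * C * t / 2) * W2 ρ ρ' := hmain
    _ ≤ Real.exp (2 * C * t / 2) * (2 * δ) :=
        mul_le_mul_of_nonneg_left hW2ρ (Real.exp_pos _).le
    _ = 2 * δ * Real.exp (2 * C * t / 2) := mul_comm _ _
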